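/- There exists a constant C = C(m, C0) such that for all integers L, l ≥ 0 and 0 ≤ K < 2^L: Σ_{k=0}^{2^l−1} |∫_0^1 ψ_{LK}(x)·ψ_{lk}(x)/M0(x) dx| ≤ C·2^{−|l−L|/2}. -/

import Mathlib

open MeasureTheory Real Set

noncomputable section

/-- The Haar mother wavelet `ψ = 1_{(0,1/2]} − 1_{(1/2,1]}`. -/
def haarMother (x : ℝ) : ℝ :=
  (Set.Ioc (0:ℝ) (1/2)).indicator (fun _ => (1:ℝ)) x
    - (Set.Ioc (1/2:ℝ) 1).indicator (fun _ => (1:ℝ)) x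

/-- The Haar wavelet `ψ_{lk}(x) = 2^{l/2} ψ(2^l x − k)`. -/
def haarPsi (l k : ℕ) (x : ℝ) : ℝ :=
  (2:ℝ) ^ ((l:ℝ) / 2) * haarMother ((2:ℝ) ^ l * x - k)

/-- The dyadic interval `I^l_k = (k 2^{−l}, (k+1) 2^{−l}]`. -/
def dyadicI (l k : ℕ) : Set ℝ := Set.Ioc ((k:ℝ) / 2 ^ l) (((k:ℝ) + 1) / 2 ^ l)

/-- `f ∈ V_L`: `f` is constant on each dyadic interval `I^{L+1}_j`, `0 ≤ j < 2^{L+1}`. -/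
def MemV (L : ℕ) (f : ℝ → ℝ) : Prop :=
  ∀ j < 2 ^ (L + 1), ∀ x ∈ dyadicI (L + 1) j, ∀ y ∈ dyadicI (L + 1) j, f x = f y

/-- The `L²`-orthogonal projection onto `V_L`: on each dyadic interval `I^{L+1}_j`,
`(P_L f)(x)` is the average `2^{L+1} ∫_{I^{L+1}_j} f`. -/
def dyadicProj (L : ℕ) (f : ℝ → ℝ) (x : ℝ) : ℝ :=
  (2:ℝ) ^ (L + 1) *
    ∫ t in (((⌈(2:ℝ) ^ (L + 1) * x⌉ - 1 : ℤ) : ℝ) / 2 ^ (L + 1))..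
        (((⌈(2:ℝ) ^ (L + 1) * x⌉ : ℤ) : ℝ) / 2 ^ (L + 1)), f t

/-- The multiscale metric
`ℓ∞(f,g) = |⟨f−g, φ⟩| + Σ_{l≥0} 2^{l/2} max_{0≤k<2^l} |⟨f−g, ψ_{lk}⟩|`. -/
def ellInfinity (f g : ℝ → ℝ) : ℝ :=
  |∫ x in (0:ℝ)..1, (f x - g x)| +
    ∑' l : ℕ, (2:ℝ) ^ ((l:ℝ) / 2) *
      ⨆ k : Fin (2 ^ l), |∫ x in (0:ℝ)..1, (f x - g x) * haarPsi l k x|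

/-- The Hölder ball `H(β,D)` on `[0,1]` (for `0 < β ≤ 1`). -/
def HolderC (β D : ℝ) (f : ℝ → ℝ) : Prop :=
  ∀ x ∈ Set.Icc (0:ℝ) 1, ∀ y ∈ Set.Icc (0:ℝ) 1, |f x - f y| ≤ D * |x - y| ^ β

section HaarAux

lemma abs_haarMother_le (x : ℝ) : |haarMother x| ≤ 1 := by
  unfold haarMother
  by_cases h1 : x ∈ Set.Ioc (0:ℝ) (1/2) <;> by_cases h2 : x ∈ Set.Ioc (1/2:ℝ) 1
  · rw [Set.indicator_of_mem h1, Set.indicator_of_mem h2]; norm_num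
  · rw [Set.indicator_of_mem h1, Set.indicator_of_notMem h2]; norm_num
  · rw [Set.indicator_of_notMem h1, Set.indicator_of_mem h2]; norm_num
  · rw [Set.indicator_of_notMem h1, Set.indicator_of_notMem h2]; norm_num

lemma haarMother_eq_zero {x : ℝ} (hx : x ∉ Set.Ioc (0:ℝ) 1) : haarMother x = 0 := by
  have h1 : x ∉ Set.Ioc (0:ℝ) (1/2) := fun h => hx ⟨h.1, h.2.trans (by norm_num)⟩
  have h2 : x ∉ Set.Ioc (1/2:ℝ) 1 := fun h => hx ⟨lt_trans (by norm_num) h.1, h.2⟩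
  unfold haarMother
  rw [Set.indicator_of_notMem h1, Set.indicator_of_notMem h2, sub_zero]

lemma measurable_haarMother : Measurable haarMother :=
  (measurable_const.indicator measurableSet_Ioc).sub
    (measurable_const.indicator measurableSet_Ioc)

lemma measurable_haarPsi (l k : ℕ) : Measurable (haarPsi l k) := by
  unfold haarPsi
  exact measurable_const.mul (measurable_haarMother.comp (by fun_prop))

lemma mem_dyadicI_iff {l k : ℕ} {x : ℝ} :
    x ∈ dyadicI l k ↔ (2:ℝ)^l * x - k ∈ Set.Ioc (0:ℝ) 1 := by
  have hp : (0:ℝ) < 2^l := by positivity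
  simp only [dyadicI, Set.mem_Ioc]
  rw [div_lt_iff₀ hp, le_div_iff₀ hp]
  constructor <;> rintro ⟨h1, h2⟩ <;> constructor <;> nlinarith

lemma mem_dyadicI_left {l k : ℕ} {x : ℝ} :
    x ∈ dyadicI (l+1) (2*k) ↔ (2:ℝ)^l * x - k ∈ Set.Ioc (0:ℝ) (1/2) := by
  have hp : (0:ℝ) < 2^l := by positivity
  simp only [dyadicI, Set.mem_Ioc]
  push_cast
  rw [div_lt_iff₀ (by positivity), le_div_iff₀ (by positivity)]
  simp only [pow_succ]
  constructor <;> rintro ⟨h1, h2⟩ <;> constructor <;> nlinarith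

lemma mem_dyadicI_right {l k : ℕ} {x : ℝ} :
    x ∈ dyadicI (l+1) (2*k+1) ↔ (2:ℝ)^l * x - k ∈ Set.Ioc (1/2:ℝ) 1 := by
  have hp : (0:ℝ) < 2^l := by positivity
  simp only [dyadicI, Set.mem_Ioc]
  push_cast
  rw [div_lt_iff₀ (by positivity), le_div_iff₀ (by positivity)]
  simp only [pow_succ]
  constructor <;> rintro ⟨h1, h2⟩ <;> constructor <;> nlinarith

lemma dyadicI_inj {n j j' : ℕ} {x : ℝ} (h : x ∈ dyadicI n j) (h' : x ∈ dyadicI n j') :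
    j = j' := by
  have hp : (0:ℝ) < 2^n := by positivity
  simp only [dyadicI, Set.mem_Ioc] at h h'
  rcases lt_trichotomy j j' with hlt | heq | hlt
  · exfalso
    have hc : (j:ℝ) + 1 ≤ j' := by exact_mod_cast hlt
    have h1 : ((j:ℝ)+1)/2^n ≤ (j':ℝ)/2^n := by gcongr
    linarith [h.2, h'.1]
  · exact heq
  · exfalso
    have hc : (j':ℝ) + 1 ≤ j := by exact_mod_cast hlt
    have h1 : ((j':ℝ)+1)/2^n ≤ (j:ℝ)/2^n := by gcongr
    linarith [h'.2, h.1]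

lemma dyadicI_subset {n N : ℕ} (h : n ≤ N) (k : ℕ) :
    dyadicI N k ⊆ dyadicI n (k / 2^(N-n)) := by
  intro x hx
  set d := N - n with hd
  set q := k / 2^d with hq
  set r := k % 2^d with hr
  have hNd : N = n + d := by omega
  have hqr : 2^d * q + r = k := Nat.div_add_mod k (2^d)
  have hrlt : r < 2^d := Nat.mod_lt _ (Nat.two_pow_pos d)
  have hp : (0:ℝ) < 2^n := by positivity
  have hpd : (0:ℝ) < 2^d := by positivity
  have hN2 : (2:ℝ)^N = 2^n * 2^d := by rw [hNd, pow_add]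
  have hkr : (k:ℝ) = 2^d * (q:ℝ) + r := by exact_mod_cast hqr.symm
  have hr0 : (0:ℝ) ≤ r := Nat.cast_nonneg r
  have hr1 : (r:ℝ) + 1 ≤ 2^d := by exact_mod_cast Nat.succ_le_of_lt hrlt
  simp only [dyadicI, Set.mem_Ioc] at hx ⊢
  obtain ⟨hx1, hx2⟩ := hx
  constructor
  · have g1 : (q:ℝ)/2^n ≤ (k:ℝ)/2^N := by
      rw [hN2, div_le_div_iff₀ hp (by positivity)]
      nlinarith [mul_nonneg hr0 hp.le]
    exact lt_of_le_of_lt g1 hx1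
  · have g2 : ((k:ℝ)+1)/2^N ≤ ((q:ℝ)+1)/2^n := by
      rw [hN2, div_le_div_iff₀ (by positivity) hp]
      nlinarith [mul_le_mul_of_nonneg_right hr1 hp.le]
    exact hx2.trans g2

lemma dyadicI_subset_Ioc {n k : ℕ} (hk : k < 2^n) : dyadicI n k ⊆ Set.Ioc (0:ℝ) 1 := by
  apply Set.Ioc_subset_Ioc
  · positivity
  · rw [div_le_one (by positivity)]
    have := Nat.succ_le_of_lt hk
    exact_mod_cast this

lemma haarPsi_eq_zero {l k : ℕ} {x : ℝ} (hx : x ∉ dyadicI l k) : haarPsi l k x = 0 := by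
  have h : (2:ℝ)^l * x - k ∉ Set.Ioc (0:ℝ) 1 := fun h => hx (mem_dyadicI_iff.mpr h)
  unfold haarPsi
  rw [haarMother_eq_zero h, mul_zero]

lemma abs_haarPsi_le (l k : ℕ) (x : ℝ) : |haarPsi l k x| ≤ (2:ℝ)^((l:ℝ)/2) := by
  unfold haarPsi
  rw [abs_mul, abs_of_pos (by positivity : (0:ℝ) < (2:ℝ)^((l:ℝ)/2))]
  exact mul_le_of_le_one_right (by positivity) (abs_haarMother_le _)

lemma haarPsi_of_mem_left {l k : ℕ} {x : ℝ} (hx : x ∈ dyadicI (l+1) (2*k)) :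
    haarPsi l k x = (2:ℝ)^((l:ℝ)/2) := by
  have h := mem_dyadicI_left.mp hx
  have h2 : (2:ℝ)^l * x - k ∉ Set.Ioc (1/2:ℝ) 1 := fun hc => absurd h.2 (not_le.mpr hc.1)
  unfold haarPsi haarMother
  rw [Set.indicator_of_mem h, Set.indicator_of_notMem h2]
  ring

lemma haarPsi_of_mem_right {l k : ℕ} {x : ℝ} (hx : x ∈ dyadicI (l+1) (2*k+1)) :
    haarPsi l k x = -(2:ℝ)^((l:ℝ)/2) := by
  have h := mem_dyadicI_right.mp hx
  have h1 : (2:ℝ)^l * x - k ∉ Set.Ioc (0:ℝ) (1/2) := fun hc => absurd hc.2 (not_le.mpr h.1)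
  unfold haarPsi haarMother
  rw [Set.indicator_of_notMem h1, Set.indicator_of_mem h]
  ring

lemma haarPsi_eq_rep (L K : ℕ) (x : ℝ) :
    haarPsi L K x = (2:ℝ)^((L:ℝ)/2) *
      ((dyadicI (L+1) (2*K)).indicator (fun _ => (1:ℝ)) x
        - (dyadicI (L+1) (2*K+1)).indicator (fun _ => (1:ℝ)) x) := by
  by_cases h1 : x ∈ dyadicI (L+1) (2*K)
  · have h2 : x ∉ dyadicI (L+1) (2*K+1) := fun h2 => by
      have := dyadicI_inj h1 h2; omega
    rw [haarPsi_of_mem_left h1, Set.indicator_of_mem h1, Set.indicator_of_notMem h2]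
    ring
  · by_cases h2 : x ∈ dyadicI (L+1) (2*K+1)
    · rw [haarPsi_of_mem_right h2, Set.indicator_of_notMem h1, Set.indicator_of_mem h2]
      ring
    · have g1 : (2:ℝ)^L * x - K ∉ Set.Ioc (0:ℝ) (1/2) := fun h => h1 (mem_dyadicI_left.mpr h)
      have g2 : (2:ℝ)^L * x - K ∉ Set.Ioc (1/2:ℝ) 1 := fun h => h2 (mem_dyadicI_right.mpr h)
      unfold haarPsi haarMother
      rw [Set.indicator_of_notMem g1, Set.indicator_of_notMem g2,
        Set.indicator_of_notMem h1, Set.indicator_of_notMem h2]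

lemma haarPsi_const_on {L K l k : ℕ} (h : L + 1 ≤ l) {x y : ℝ}
    (hx : x ∈ dyadicI l k) (hy : y ∈ dyadicI l k) : haarPsi L K x = haarPsi L K y := by
  have hsub := dyadicI_subset h k
  have key : ∀ j : ℕ, (x ∈ dyadicI (L+1) j ↔ y ∈ dyadicI (L+1) j) := by
    intro j
    constructor <;> intro hm
    · have hj := dyadicI_inj hm (hsub hx)
      rw [hj]; exact hsub hy
    · have hj := dyadicI_inj hm (hsub hy)
      rw [hj]; exact hsub hx
  have e : ∀ j, (dyadicI (L+1) j).indicator (fun _ => (1:ℝ)) x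
      = (dyadicI (L+1) j).indicator (fun _ => (1:ℝ)) y := by
    intro j
    by_cases hm : x ∈ dyadicI (L+1) j
    · rw [Set.indicator_of_mem hm, Set.indicator_of_mem ((key j).mp hm)]
    · rw [Set.indicator_of_notMem hm,
        Set.indicator_of_notMem (fun hc => hm ((key j).mpr hc))]
  rw [haarPsi_eq_rep L K x, haarPsi_eq_rep L K y, e (2*K), e (2*K+1)]

lemma integrableOn_bdd {f : ℝ → ℝ} (hf : Measurable f) {s : Set ℝ} (hs : MeasurableSet s)
    (hvol : volume s < ⊤) {B : ℝ} (hB : ∀ x ∈ s, |f x| ≤ B) :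
    MeasureTheory.IntegrableOn f s volume := by
  have hc : MeasureTheory.IntegrableOn (fun _ => B) s volume :=
    integrableOn_const hvol.ne
  refine hc.mono' hf.aestronglyMeasurable ?_
  rw [ae_restrict_iff' hs]
  exact MeasureTheory.ae_of_all _ (fun x hx => by simpa [Real.norm_eq_abs] using hB x hx)

end HaarAux


/-- Summed coefficient bound: `Σ_{k<2^l} |∫_0^1 ψ_{LK} ψ_{lk} / M0| ≤ C 2^{−|l−L|/2}`, with a
constant depending only on the lower bound `m` of `M0` and the Lipschitz constant `C0` of
`1/M0`. -/
theorem haar_coeff_sum_of_psiLK_div_M0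
    (m C0 : ℝ) (hm : 0 < m) (hC0 : 0 < C0) :
    ∃ C : ℝ, 0 < C ∧
      ∀ M0 : ℝ → ℝ, Measurable M0 →
        (∀ u ∈ Set.Icc (0:ℝ) 1, m ≤ M0 u ∧ M0 u ≤ 1) →
        LipschitzOnWith (Real.toNNReal C0) (fun u => 1 / M0 u) (Set.Icc 0 1) →
        ∀ L l K : ℕ, K < 2 ^ L →
          (∑ k ∈ Finset.range (2 ^ l),
              |∫ x in (0:ℝ)..1, haarPsi L K x * haarPsi l k x / M0 x|)
            ≤ C * (2:ℝ) ^ (-(|(l:ℝ) - (L:ℝ)| / 2)) := by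
  classical
  refine ⟨1/m + C0, by positivity, ?_⟩
  intro M0 hM0m hM0 hLip L l K hK
  have h01 : (0:ℝ) ≤ 1 := by norm_num
  have hfin : ∀ u v : ℝ, volume (Set.Ioc u v) < ⊤ := fun u v => by
    rw [Real.volume_Ioc]; exact ENNReal.ofReal_lt_top
  have hMpos : ∀ x ∈ Set.Ioc (0:ℝ) 1, 0 < M0 x := fun x hx =>
    lt_of_lt_of_le hm (hM0 x (Set.Ioc_subset_Icc_self hx)).1
  have hbound : ∀ (k1 k2 : ℕ), ∀ x ∈ Set.Ioc (0:ℝ) 1,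
      |haarPsi L k1 x * haarPsi l k2 x / M0 x| ≤ 2^((L:ℝ)/2) * 2^((l:ℝ)/2) / m := by
    intro k1 k2 x hx
    rw [abs_div, abs_of_pos (hMpos x hx)]
    refine div_le_div₀ (by positivity) ?_ hm (hM0 x (Set.Ioc_subset_Icc_self hx)).1
    rw [abs_mul]
    exact mul_le_mul (abs_haarPsi_le _ _ _) (abs_haarPsi_le _ _ _) (abs_nonneg _) (by positivity)
  have hmeasf : ∀ k : ℕ, Measurable (fun x => haarPsi L K x * haarPsi l k x / M0 x) :=
    fun k => ((measurable_haarPsi L K).mul (measurable_haarPsi l k)).div hM0m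
  have hXpos : (0:ℝ) < (2:ℝ) ^ (-(|(l:ℝ) - (L:ℝ)| / 2)) := Real.rpow_pos_of_pos two_pos _
  rcases le_or_gt l L with hlL | hLl
  · -- case l ≤ L
    have habsLl : |(l:ℝ) - (L:ℝ)| = (L:ℝ) - l := by
      rw [abs_of_nonpos (sub_nonpos.mpr (Nat.cast_le.mpr hlL))]; ring
    set k0 := K / 2^(L - l) with hk0def
    have hpow : 2^L = 2^l * 2^(L-l) := by rw [← pow_add, Nat.add_sub_cancel' hlL]
    have hk0 : k0 < 2^l := by
      rw [hk0def, Nat.div_lt_iff_lt_mul (Nat.two_pow_pos _)]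
      exact hpow ▸ hK
    have hsubK : dyadicI L K ⊆ dyadicI l k0 := dyadicI_subset hlL K
    have hzero : ∀ k ∈ Finset.range (2^l), k ≠ k0 →
        |∫ x in (0:ℝ)..1, haarPsi L K x * haarPsi l k x / M0 x| = 0 := by
      intro k _ hne
      have hz : ∀ x : ℝ, haarPsi L K x * haarPsi l k x / M0 x = 0 := by
        intro x
        by_cases hx1 : x ∈ dyadicI L K
        · by_cases hx2 : x ∈ dyadicI l k
          · exact absurd (dyadicI_inj hx2 (hsubK hx1)) hne
          · rw [haarPsi_eq_zero hx2]; simp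
        · rw [haarPsi_eq_zero hx1]; simp
      simp only [hz]
      simp
    rw [Finset.sum_eq_single_of_mem k0 (Finset.mem_range.mpr hk0) hzero]
    have hIoc : dyadicI L K ⊆ Set.Ioc (0:ℝ) 1 := dyadicI_subset_Ioc hK
    have hvan : ∀ x ∈ Set.Ioc (0:ℝ) 1 \ dyadicI L K,
        haarPsi L K x * haarPsi l k0 x / M0 x = 0 := by
      intro x hx
      rw [haarPsi_eq_zero hx.2]; simp
    have hvolval : (volume (dyadicI L K)).toReal = 1/2^L := by
      rw [dyadicI, Real.volume_Ioc, ENNReal.toReal_ofReal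
        (by rw [sub_nonneg]; gcongr; linarith)]
      ring
    have hmain : |∫ x in (0:ℝ)..1, haarPsi L K x * haarPsi l k0 x / M0 x|
        ≤ (2^((L:ℝ)/2) * 2^((l:ℝ)/2) / m) * (1/2^L) := by
      rw [intervalIntegral.integral_of_le h01,
        MeasureTheory.setIntegral_eq_of_subset_of_forall_diff_eq_zero
          measurableSet_Ioc hIoc hvan]
      calc |∫ x in dyadicI L K, haarPsi L K x * haarPsi l k0 x / M0 x|
          ≤ (2^((L:ℝ)/2) * 2^((l:ℝ)/2) / m) * (volume (dyadicI L K)).toReal := by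
            rw [← Real.norm_eq_abs]
            exact MeasureTheory.norm_setIntegral_le_of_norm_le_const (hfin _ _)
              (fun x hx => by rw [Real.norm_eq_abs]; exact hbound K k0 x (hIoc hx))
        _ = (2^((L:ℝ)/2) * 2^((l:ℝ)/2) / m) * (1/2^L) := by rw [hvolval]
    refine hmain.trans ?_
    rw [habsLl]
    have c1 : ((2:ℝ))^(L:ℕ) = (2:ℝ)^((L:ℝ)) := (Real.rpow_natCast 2 L).symm
    have e1 : 2^((L:ℝ)/2) * 2^((l:ℝ)/2) / m * (1/2^L)
        = (1/m) * (2:ℝ)^(-(((L:ℝ) - (l:ℝ))/2)) := by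
      have h2 : (2:ℝ)^((L:ℝ)/2) * 2^((l:ℝ)/2) * (2:ℝ)^(-(L:ℝ))
          = (2:ℝ)^(-(((L:ℝ) - (l:ℝ))/2)) := by
        rw [← Real.rpow_add two_pos, ← Real.rpow_add two_pos]
        congr 1; ring
      calc 2^((L:ℝ)/2) * 2^((l:ℝ)/2) / m * (1/2^L)
          = (1/m) * (2^((L:ℝ)/2) * 2^((l:ℝ)/2) * ((2:ℝ)^((L:ℝ)))⁻¹) := by
            rw [c1]; ring
        _ = (1/m) * (2^((L:ℝ)/2) * 2^((l:ℝ)/2) * (2:ℝ)^(-(L:ℝ))) := by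
            rw [← Real.rpow_neg two_pos.le]
        _ = (1/m) * (2:ℝ)^(-(((L:ℝ) - (l:ℝ))/2)) := by rw [h2]
    rw [e1]
    have hX2 : (0:ℝ) < (2:ℝ)^(-(((L:ℝ) - (l:ℝ))/2)) := Real.rpow_pos_of_pos two_pos _
    have : (1:ℝ)/m ≤ 1/m + C0 := by linarith
    exact mul_le_mul_of_nonneg_right this hX2.le
  · -- case L < l
    have hL1 : L + 1 ≤ l := hLl
    have habsLl : |(l:ℝ) - (L:ℝ)| = (l:ℝ) - L :=
      abs_of_nonneg (sub_nonneg.mpr (Nat.cast_le.mpr hLl.le))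
    set B : ℝ := 2^((L:ℝ)/2) * (2^((l:ℝ)/2) * (C0 * ((1/(2:ℝ)^(l+1)) * (1/(2:ℝ)^(l+1)))))
      with hB
    have key : ∀ k ∈ Finset.range (2^l),
        |∫ x in (0:ℝ)..1, haarPsi L K x * haarPsi l k x / M0 x| ≤ B := by
      intro k hkr
      have hk : k < 2^l := Finset.mem_range.mp hkr
      have hpl : (0:ℝ) < 2^l := by positivity
      have hpl1 : (0:ℝ) < 2^(l+1) := by positivity
      set a : ℝ := (k:ℝ)/2^l with ha
      set b : ℝ := ((k:ℝ)+1)/2^l with hbdef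
      set mid : ℝ := (2*(k:ℝ)+1)/2^(l+1) with hmid
      set δ : ℝ := 1/(2:ℝ)^(l+1) with hδ
      have hδpos : 0 < δ := by rw [hδ]; positivity
      have hamid : a + δ = mid := by
        rw [ha, hδ, hmid, pow_succ]; field_simp
      have hmidb : mid + δ = b := by
        rw [hbdef, hδ, hmid, pow_succ]; field_simp; ring
      have haltm : a < mid := by rw [← hamid]; linarith
      have hmltb : mid < b := by rw [← hmidb]; linarith
      have ha0 : 0 ≤ a := by rw [ha]; positivity
      have hb1 : b ≤ 1 := by
        rw [hbdef, div_le_one hpl]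
        exact_mod_cast Nat.succ_le_of_lt hk
      have hIk : dyadicI l k = Set.Ioc a b := by unfold dyadicI; rw [ha, hbdef]
      have hsub01 : Set.Ioc a b ⊆ Set.Ioc (0:ℝ) 1 := by
        have := dyadicI_subset_Ioc hk; rwa [hIk] at this
      have ea : (2*(k:ℝ))/2^(l+1) = a := by
        rw [ha, pow_succ]; field_simp
      have eb : (2*(k:ℝ)+1+1)/2^(l+1) = b := by
        rw [hbdef, pow_succ]; field_simp; ring
      have hmemL : ∀ x : ℝ, x ∈ Set.Ioc a mid → x ∈ dyadicI (l+1) (2*k) := by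
        intro x hx
        refine ⟨?_, ?_⟩
        · show ((2*k : ℕ):ℝ)/2^(l+1) < x
          push_cast
          rw [ea]; exact hx.1
        · show x ≤ (((2*k : ℕ):ℝ) + 1)/2^(l+1)
          push_cast
          rw [← hmid]; exact hx.2
      have hmemR : ∀ x : ℝ, x ∈ Set.Ioc mid b → x ∈ dyadicI (l+1) (2*k+1) := by
        intro x hx
        refine ⟨?_, ?_⟩
        · show ((2*k+1 : ℕ):ℝ)/2^(l+1) < x
          push_cast
          rw [← hmid]; exact hx.1
        · show x ≤ (((2*k+1 : ℕ):ℝ) + 1)/2^(l+1)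
          push_cast
          rw [eb]; exact hx.2
      have hbmem : b ∈ dyadicI l k := by
        rw [hIk]; exact ⟨haltm.trans hmltb, le_rfl⟩
      set c : ℝ := haarPsi L K b with hc
      have hconst : ∀ x ∈ dyadicI l k, haarPsi L K x = c :=
        fun x hx => haarPsi_const_on hL1 hx hbmem
      have hcabs : |c| ≤ 2^((L:ℝ)/2) := abs_haarPsi_le L K b
      have hfun : ∀ x : ℝ,
          haarPsi L K x * haarPsi l k x / M0 x = c * haarPsi l k x / M0 x := by
        intro x
        by_cases hx : x ∈ dyadicI l k
        · rw [hconst x hx]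
        · rw [haarPsi_eq_zero hx]; simp
      have hmeash : Measurable (fun x : ℝ => (M0 x)⁻¹) := hM0m.inv
      have hbound_h : ∀ x ∈ Set.Ioc (0:ℝ) 1, |(M0 x)⁻¹| ≤ 1/m := by
        intro x hx
        rw [abs_of_pos (inv_pos.mpr (hMpos x hx)), one_div]
        exact inv_anti₀ hm (hM0 x (Set.Ioc_subset_Icc_self hx)).1
      have hboundc : ∀ x ∈ Set.Ioc (0:ℝ) 1,
          |c * haarPsi l k x / M0 x| ≤ 2^((L:ℝ)/2) * 2^((l:ℝ)/2) / m := by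
        intro x hx
        rw [abs_div, abs_of_pos (hMpos x hx)]
        refine div_le_div₀ (by positivity) ?_ hm (hM0 x (Set.Ioc_subset_Icc_self hx)).1
        rw [abs_mul]
        exact mul_le_mul hcabs (abs_haarPsi_le _ _ _) (abs_nonneg _) (by positivity)
      have hmeasc : Measurable (fun x => c * haarPsi l k x / M0 x) :=
        (measurable_const.mul (measurable_haarPsi l k)).div hM0m
      have hint1 : MeasureTheory.IntegrableOn (fun x => c * haarPsi l k x / M0 x)
          (Set.Ioc a mid) volume :=
        integrableOn_bdd hmeasc measurableSet_Ioc (hfin _ _)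
          (fun x hx => hboundc x (hsub01 (Set.Ioc_subset_Ioc_right hmltb.le hx)))
      have hint2 : MeasureTheory.IntegrableOn (fun x => c * haarPsi l k x / M0 x)
          (Set.Ioc mid b) volume :=
        integrableOn_bdd hmeasc measurableSet_Ioc (hfin _ _)
          (fun x hx => hboundc x (hsub01 (Set.Ioc_subset_Ioc_left haltm.le hx)))
      have hsplit : ∫ x in Set.Ioc a b, c * haarPsi l k x / M0 x
          = (∫ x in Set.Ioc a mid, c * haarPsi l k x / M0 x)
            + ∫ x in Set.Ioc mid b, c * haarPsi l k x / M0 x := by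
        rw [← Set.Ioc_union_Ioc_eq_Ioc haltm.le hmltb.le]
        exact MeasureTheory.setIntegral_union (Set.Ioc_disjoint_Ioc_of_le le_rfl)
          measurableSet_Ioc hint1 hint2
      set S := ∫ x in Set.Ioc a mid, (M0 x)⁻¹ with hSdef
      set T := ∫ x in Set.Ioc mid b, (M0 x)⁻¹ with hTdef
      have hint_left : ∫ x in Set.Ioc a mid, c * haarPsi l k x / M0 x
          = (c * 2^((l:ℝ)/2)) * S := by
        rw [hSdef, ← MeasureTheory.integral_const_mul]
        refine MeasureTheory.setIntegral_congr_fun measurableSet_Ioc (fun x hx => ?_)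
        rw [haarPsi_of_mem_left (hmemL x hx), div_eq_mul_inv]
      have hint_right : ∫ x in Set.Ioc mid b, c * haarPsi l k x / M0 x
          = -((c * 2^((l:ℝ)/2)) * T) := by
        rw [hTdef, ← MeasureTheory.integral_const_mul, ← MeasureTheory.integral_neg]
        refine MeasureTheory.setIntegral_congr_fun measurableSet_Ioc (fun x hx => ?_)
        rw [haarPsi_of_mem_right (hmemR x hx), div_eq_mul_inv]
        ring
      have hvanc : ∀ x ∈ Set.Ioc (0:ℝ) 1 \ Set.Ioc a b,
          c * haarPsi l k x / M0 x = 0 := by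
        intro x hx
        have : x ∉ dyadicI l k := by rw [hIk]; exact hx.2
        rw [haarPsi_eq_zero this]; simp
      have htotal : ∫ x in (0:ℝ)..1, haarPsi L K x * haarPsi l k x / M0 x
          = (c * 2^((l:ℝ)/2)) * (S - T) := by
        rw [intervalIntegral.integral_of_le h01]
        simp only [hfun]
        rw [MeasureTheory.setIntegral_eq_of_subset_of_forall_diff_eq_zero
          measurableSet_Ioc hsub01 hvanc, hsplit, hint_left, hint_right]
        ring
      -- cancellation bound
      have hx01 : ∀ x ∈ Set.Ioc a mid, x ∈ Set.Icc (0:ℝ) 1 := fun x hx =>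
        Set.Ioc_subset_Icc_self (hsub01 (Set.Ioc_subset_Ioc_right hmltb.le hx))
      have hxd : ∀ x ∈ Set.Ioc a mid, x + δ ∈ Set.Ioc (0:ℝ) 1 := by
        intro x hx
        constructor
        · have := hx.1; linarith
        · have := hx.2; linarith [hmidb, hb1]
      have hlip : ∀ x ∈ Set.Ioc a mid, |(M0 x)⁻¹ - (M0 (x+δ))⁻¹| ≤ C0 * δ := by
        intro x hx
        have hd := hLip.dist_le_mul x (hx01 x hx) (x+δ) (Set.Ioc_subset_Icc_self (hxd x hx))
        simp only [one_div] at hd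
        rw [Real.dist_eq, Real.dist_eq, Real.coe_toNNReal _ hC0.le] at hd
        have habs : |x - (x+δ)| = δ := by
          rw [show x - (x+δ) = -δ by ring, abs_neg, abs_of_pos hδpos]
        rwa [habs] at hd
      have hii1 : IntervalIntegrable (fun x => (M0 x)⁻¹) volume a mid :=
        (intervalIntegrable_iff_integrableOn_Ioc_of_le haltm.le).mpr
          (integrableOn_bdd hmeash measurableSet_Ioc (hfin _ _)
            (fun x hx => hbound_h x (hsub01 (Set.Ioc_subset_Ioc_right hmltb.le hx))))
      have hii2 : IntervalIntegrable (fun x => (M0 (x+δ))⁻¹) volume a mid :=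
        (intervalIntegrable_iff_integrableOn_Ioc_of_le haltm.le).mpr
          (integrableOn_bdd (hmeash.comp (by fun_prop)) measurableSet_Ioc (hfin _ _)
            (fun x hx => hbound_h (x+δ) (hxd x hx)))
      have hST : |S - T| ≤ C0 * δ * δ := by
        have hSi : S = ∫ x in a..mid, (M0 x)⁻¹ :=
          (intervalIntegral.integral_of_le haltm.le).symm
        have hTi : T = ∫ x in a..mid, (M0 (x+δ))⁻¹ := by
          rw [intervalIntegral.integral_comp_add_right (fun u => (M0 u)⁻¹) δ, hamid, hmidb,
            intervalIntegral.integral_of_le hmltb.le]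
        have hdiff : S - T = ∫ x in a..mid, ((M0 x)⁻¹ - (M0 (x+δ))⁻¹) := by
          rw [hSi, hTi, intervalIntegral.integral_sub hii1 hii2]
        rw [hdiff]
        have hb2 := intervalIntegral.norm_integral_le_of_norm_le_const
          (C := C0 * δ) (f := fun x => (M0 x)⁻¹ - (M0 (x+δ))⁻¹) (a := a) (b := mid)
          (fun x hx => by
            rw [Real.norm_eq_abs]
            exact hlip x (by rwa [Set.uIoc_of_le haltm.le] at hx))
        rw [Real.norm_eq_abs] at hb2
        have habs2 : |mid - a| = δ := by
          rw [show mid - a = δ by rw [← hamid]; ring, abs_of_pos hδpos]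
        rw [habs2] at hb2
        exact hb2
      rw [htotal]
      calc |(c * 2^((l:ℝ)/2)) * (S - T)| = |c| * (2^((l:ℝ)/2) * |S - T|) := by
            rw [abs_mul, abs_mul, abs_of_pos (by positivity : (0:ℝ) < (2:ℝ)^((l:ℝ)/2))]
            ring
        _ ≤ 2^((L:ℝ)/2) * (2^((l:ℝ)/2) * (C0 * δ * δ)) := by
            gcongr
        _ = B := by rw [hB, hδ]; ring
    have hsum : (∑ k ∈ Finset.range (2^l),
        |∫ x in (0:ℝ)..1, haarPsi L K x * haarPsi l k x / M0 x|)
        ≤ (2^l : ℕ) • B := by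
      have := Finset.sum_le_card_nsmul _ _ _ key
      rwa [Finset.card_range] at this
    refine hsum.trans ?_
    rw [nsmul_eq_mul, habsLl]
    push_cast
    have c1 : ((2:ℝ))^(l:ℕ) = (2:ℝ)^((l:ℝ)) := (Real.rpow_natCast 2 l).symm
    have c2 : ((2:ℝ))^((l:ℕ)+1) = (2:ℝ)^((l:ℝ)+1) := by
      rw [← Real.rpow_natCast 2 (l+1)]; norm_num
    have cinv : ((2:ℝ)^((l:ℝ)+1))⁻¹ = (2:ℝ)^(-((l:ℝ)+1)) := by
      rw [← Real.rpow_neg two_pos.le]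
    have two_rpow_mul : ∀ x y : ℝ, (2:ℝ)^x * (2:ℝ)^y = (2:ℝ)^(x+y) :=
      fun x y => (Real.rpow_add two_pos x y).symm
    have h4 : (2:ℝ)^(-2:ℝ) = 1/4 := by
      rw [show (-2:ℝ) = ((-2:ℤ):ℝ) by norm_num, Real.rpow_intCast]; norm_num
    have e2 : (2:ℝ)^(l:ℕ) * B = (C0/4) * (2:ℝ)^(-(((l:ℝ) - (L:ℝ))/2)) := by
      rw [hB, c1, c2]
      simp only [one_div, cinv]
      calc (2:ℝ)^((l:ℝ)) * (2^((L:ℝ)/2) * (2^((l:ℝ)/2)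
              * (C0 * (2^(-((l:ℝ)+1)) * 2^(-((l:ℝ)+1))))))
          = C0 * ((2:ℝ)^((l:ℝ)) * 2^((L:ℝ)/2) * 2^((l:ℝ)/2)
              * 2^(-((l:ℝ)+1)) * 2^(-((l:ℝ)+1))) := by ring
        _ = C0 * (2:ℝ)^((l:ℝ) + (L:ℝ)/2 + (l:ℝ)/2 + -((l:ℝ)+1) + -((l:ℝ)+1)) := by
            rw [two_rpow_mul, two_rpow_mul, two_rpow_mul, two_rpow_mul]
        _ = C0 * (2:ℝ)^(-(((l:ℝ) - (L:ℝ))/2) + (-2:ℝ)) := by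
            rw [show (l:ℝ) + (L:ℝ)/2 + (l:ℝ)/2 + -((l:ℝ)+1) + -((l:ℝ)+1)
              = -(((l:ℝ) - (L:ℝ))/2) + (-2:ℝ) from by ring]
        _ = C0 * ((2:ℝ)^(-(((l:ℝ) - (L:ℝ))/2)) * (2:ℝ)^(-2:ℝ)) := by
            rw [two_rpow_mul]
        _ = (C0/4) * (2:ℝ)^(-(((l:ℝ) - (L:ℝ))/2)) := by rw [h4]; ring
    rw [e2]
    have hX2 : (0:ℝ) < (2:ℝ)^(-(((l:ℝ) - (L:ℝ))/2)) := Real.rpow_pos_of_pos two_pos _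
    have : C0/4 ≤ 1/m + C0 := by
      have : 0 < 1/m := by positivity
      linarith
    exact mul_le_mul_of_nonneg_right this hX2.le
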